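/- Let k ∈ ℕ, let c₀, ..., c_k be positive reals, and let α ∈ ℝ. If for each j ∈ {0,...,k} it holds that c_j > -Σ_{j < m ≤ k} c_m · C(m, 2(m-j)) · (-1)^(m-j) · (2α-1)^(2(m-j)), then the real polynomial 𝔭(ξ) := Re Σ_{j=0}^k c_j (-iξ)^j (iξ + 2α - 1)^j = Σ_{j=0}^k d_j ξ^(2j), where d_j = c_j + Σ_{j < m ≤ k} c_m · C(m, 2(m-j)) · (-1)^(m-j) · (2α-1)^(2(m-j)), has all coefficients d_j > 0 and hence is strictly positive for all real ξ; consequently Σ_{j=0}^k c_j (-iξ)^j (iξ + 2α - 1)^j ≠ 0 for all ξ ∈ ℝ. -/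

import Mathlib

open Finset Complex

lemma I_pow_two_mul_re (r : ℕ) : (Complex.I ^ (2*r)).re = (-1:ℝ)^r := by
  rw [pow_mul, Complex.I_sq]
  have : ((-1:ℂ))^r = (((-1:ℝ)^r : ℝ) : ℂ) := by push_cast; ring
  rw [this, Complex.ofReal_re]

lemma sum_FG (β ξ : ℝ) (j : ℕ) :
    ∑ q ∈ Finset.range (j+1),
        (ξ^2)^(j-q) * (-(β*ξ))^q * (Nat.choose j q : ℝ) * (Complex.I^q).re
      = ∑ p ∈ Finset.range (j+1),
          (Nat.choose j (2*(j-p)) : ℝ) * (-1:ℝ)^(j-p) * β^(2*(j-p)) * ξ^(2*p) := by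
  conv_lhs => rw [← Finset.sum_filter_of_ne (p := fun q => Even q)
    (by
      intro q _ hne
      by_contra hodd
      rw [Nat.not_even_iff_odd] at hodd
      obtain ⟨r, rfl⟩ := hodd
      apply hne
      have e : ((-1:ℂ))^r = (((-1:ℝ)^r : ℝ) : ℂ) := by push_cast; ring
      have : (Complex.I ^ (2*r+1)).re = 0 := by
        rw [pow_succ, pow_mul, Complex.I_sq, e, Complex.re_ofReal_mul, Complex.I_re, mul_zero]
      rw [this, mul_zero])]
  conv_rhs => rw [← Finset.sum_filter_of_ne (p := fun p => 2*(j-p) ≤ j)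
    (by
      intro p hp hne
      simp only [Finset.mem_range] at hp
      by_contra hgt
      exact hne (by rw [Nat.choose_eq_zero_of_lt (by omega)]; simp))]
  refine Finset.sum_bij' (fun q _ => j - q/2) (fun p _ => 2*(j-p)) ?_ ?_ ?_ ?_ ?_
  · intro q hq
    simp only [Finset.mem_filter, Finset.mem_range] at hq ⊢
    obtain ⟨hq1, r, rfl⟩ := hq
    constructor
    · omega
    · omega
  · intro p hp
    simp only [Finset.mem_filter, Finset.mem_range] at hp ⊢
    exact ⟨by omega, ⟨j-p, by ring⟩⟩
  · intro q hq
    simp only [Finset.mem_filter, Finset.mem_range] at hq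
    obtain ⟨hq1, r, rfl⟩ := hq
    omega
  · intro p hp
    simp only [Finset.mem_filter, Finset.mem_range] at hp
    omega
  · intro q hq
    simp only [Finset.mem_filter, Finset.mem_range] at hq
    obtain ⟨hq1, r, rfl⟩ := hq
    have h1 : (r+r)/2 = r := by omega
    have h2 : j - (j - r) = r := by omega
    have hI : (Complex.I ^ (r+r)).re = (-1:ℝ)^r := by
      rw [show r+r = 2*r by ring, I_pow_two_mul_re]
    have hneg : (-(β*ξ))^(r+r) = β^(r+r) * ξ^(r+r) := by
      rw [Even.neg_pow ⟨r, rfl⟩, mul_pow]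
    have hx : (ξ^2)^(j-(r+r)) * ξ^(r+r) = ξ^(2*(j-r)) := by
      rw [← pow_mul, ← pow_add]
      congr 1
      omega
    rw [h1, h2, hI, hneg, show 2*r = r+r by ring, ← hx]
    ring


lemma re_pow_key (β ξ : ℝ) (j : ℕ) :
    ((((ξ^2 : ℝ) : ℂ) + ((-(β*ξ) : ℝ) : ℂ) * Complex.I) ^ j).re
      = ∑ p ∈ Finset.range (j+1),
          (Nat.choose j (2*(j-p)) : ℝ) * (-1:ℝ)^(j-p) * β^(2*(j-p)) * ξ^(2*p) := by
  rw [add_pow, Complex.re_sum]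
  have hterm : ∀ l ∈ Finset.range (j+1),
      (((((ξ^2:ℝ):ℂ))^l * ((((-(β*ξ):ℝ)):ℂ) * Complex.I)^(j-l) * (Nat.choose j l : ℂ)).re)
        = (ξ^2)^l * (-(β*ξ))^(j-l) * (Nat.choose j l : ℝ) * (Complex.I^(j-l)).re := by
    intro l _
    have : (((ξ^2:ℝ):ℂ))^l * ((((-(β*ξ):ℝ)):ℂ) * Complex.I)^(j-l) * (Nat.choose j l : ℂ)
        = ((((ξ^2)^l * (-(β*ξ))^(j-l) * (Nat.choose j l : ℝ)) : ℝ) : ℂ) * Complex.I^(j-l) := by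
      push_cast; ring
    rw [this, Complex.re_ofReal_mul]
  rw [Finset.sum_congr rfl hterm, ← Finset.sum_range_reflect]
  rw [← sum_FG β ξ j]
  refine Finset.sum_congr rfl ?_
  intro q hq
  simp only [Finset.mem_range] at hq
  have h1 : j + 1 - 1 - q = j - q := by omega
  have h2 : j - (j - q) = q := by omega
  rw [h1, h2, Nat.choose_symm (by omega)]


/-- If `c₀,…,c_k > 0` satisfy the stated lower bounds, then the coefficients
`d_j` of the even polynomial `Re ∑ c_j (-iξ)^j (iξ+2α-1)^j = ∑ d_j ξ^(2j)`
are positive, the polynomial is strictly positive, and hence the complex sum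
never vanishes for real `ξ`. -/
theorem polynomial_no_real_zeros (k : ℕ) (c : ℕ → ℝ) (α : ℝ)
    (hc : ∀ j ≤ k, 0 < c j)
    (hcond : ∀ j ≤ k, c j >
      -∑ m ∈ Finset.Ioc j k,
        c m * (Nat.choose m (2*(m-j)) : ℝ) * (-1:ℝ)^(m-j) * (2*α-1)^(2*(m-j))) :
    let d : ℕ → ℝ := fun j => c j +
      ∑ m ∈ Finset.Ioc j k,
        c m * (Nat.choose m (2*(m-j)) : ℝ) * (-1:ℝ)^(m-j) * (2*α-1)^(2*(m-j))
    (∀ j ≤ k, 0 < d j) ∧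
    (∀ ξ : ℝ, (∑ j ∈ Finset.range (k+1),
        (c j : ℂ) * (-Complex.I * ξ)^j * (Complex.I * ξ + 2*α - 1)^j).re
      = ∑ j ∈ Finset.range (k+1), d j * ξ^(2*j)) ∧
    (∀ ξ : ℝ, 0 < ∑ j ∈ Finset.range (k+1), d j * ξ^(2*j)) ∧
    (∀ ξ : ℝ, ∑ j ∈ Finset.range (k+1),
        (c j : ℂ) * (-Complex.I * ξ)^j * (Complex.I * ξ + 2*α - 1)^j ≠ 0) := by
  intro d
  set β : ℝ := 2*α - 1 with hβ
  have hd : ∀ j ≤ k, 0 < d j := by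
    intro j hj
    have h := hcond j hj
    have : d j = c j + ∑ m ∈ Finset.Ioc j k,
        c m * (Nat.choose m (2*(m-j)) : ℝ) * (-1:ℝ)^(m-j) * (2*α-1)^(2*(m-j)) := rfl
    rw [this]
    linarith
  have hre : ∀ ξ : ℝ, (∑ j ∈ Finset.range (k+1),
        (c j : ℂ) * (-Complex.I * ξ)^j * (Complex.I * ξ + 2*α - 1)^j).re
      = ∑ j ∈ Finset.range (k+1), d j * ξ^(2*j) := by
    intro ξ
    have hbase : (-Complex.I * (ξ:ℂ)) * (Complex.I * ξ + 2*α - 1)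
        = (((ξ^2 : ℝ) : ℂ) + ((-(β*ξ) : ℝ) : ℂ) * Complex.I) := by
      rw [hβ]
      push_cast
      ring_nf
      rw [Complex.I_sq]
      ring
    have hterm : ∀ j ∈ Finset.range (k+1),
        (c j : ℂ) * (-Complex.I * ξ)^j * (Complex.I * ξ + 2*α - 1)^j
          = (c j : ℂ) * ((((ξ^2 : ℝ) : ℂ) + ((-(β*ξ) : ℝ) : ℂ) * Complex.I))^j := by
      intro j _
      rw [mul_assoc, ← mul_pow, hbase]
    rw [Finset.sum_congr rfl hterm, Complex.re_sum]
    have hterm2 : ∀ j ∈ Finset.range (k+1),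
        ((c j : ℂ) * ((((ξ^2 : ℝ) : ℂ) + ((-(β*ξ) : ℝ) : ℂ) * Complex.I))^j).re
          = ∑ p ∈ Finset.range (j+1),
              c j * ((Nat.choose j (2*(j-p)) : ℝ) * (-1:ℝ)^(j-p) * β^(2*(j-p)) * ξ^(2*p)) := by
      intro j _
      rw [Complex.re_ofReal_mul, re_pow_key, Finset.mul_sum]
    rw [Finset.sum_congr rfl hterm2]
    rw [Finset.sum_comm' (t' := Finset.range (k+1)) (s' := fun p => Finset.Icc p k)
      (by
        intro x y
        simp only [Finset.mem_range, Finset.mem_Icc]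
        omega)]
    refine Finset.sum_congr rfl ?_
    intro p hp
    simp only [Finset.mem_range] at hp
    rw [Finset.Icc_eq_cons_Ioc (by omega : p ≤ k), Finset.sum_cons]
    have hdp : d p * ξ^(2*p) = c p * ξ^(2*p) + (∑ m ∈ Finset.Ioc p k,
        c m * (Nat.choose m (2*(m-p)) : ℝ) * (-1:ℝ)^(m-p) * β^(2*(m-p))) * ξ^(2*p) := by
      rw [← add_mul]
    rw [hdp, Finset.sum_mul]
    congr 1
    · simp [Nat.sub_self]
    · refine Finset.sum_congr rfl ?_
      intro m _
      ring
  refine ⟨hd, hre, ?_, ?_⟩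
  · intro ξ
    have hpos : ∀ j ∈ Finset.range (k+1), 0 ≤ d j * ξ^(2*j) := by
      intro j hj
      simp only [Finset.mem_range] at hj
      exact mul_nonneg (hd j (by omega)).le (by rw [pow_mul]; positivity)
    refine Finset.sum_pos' hpos ⟨0, Finset.mem_range.mpr (by omega), ?_⟩
    simpa using hd 0 (by omega)
  · intro ξ h
    have h0 : (0:ℝ) < ∑ j ∈ Finset.range (k+1), d j * ξ^(2*j) := by
      have hpos : ∀ j ∈ Finset.range (k+1), 0 ≤ d j * ξ^(2*j) := by
        intro j hj
        simp only [Finset.mem_range] at hj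
        exact mul_nonneg (hd j (by omega)).le (by rw [pow_mul]; positivity)
      refine Finset.sum_pos' hpos ⟨0, Finset.mem_range.mpr (by omega), ?_⟩
      simpa using hd 0 (by omega)
    rw [← hre ξ, h] at h0
    simp at h0
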